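/- Let n ≥ 2, X = (x₁,…,xₙ) with xᵢ ≥ 0, and weight vectors α, β with positive entries summing to 1. Then E_α X − Π_α X ≤ max_k(α_k/β_k) · min{1/α_min, 1/β_min} · Var_β(X^{1/2}). -/

import Mathlib

open Finset

/-- 3-term weighted AM-GM specialization. -/
private lemma gm3 {m p t h : ℝ} (hm : 0 < m) (hmp : m ≤ p) (hpm : p + m ≤ 1)
    (ht : 0 ≤ t) (hh : 0 ≤ h) :
    2*p*(1-p)*(t*h) ≤ p*(1-m-p)*t^2 + (p-m)*(1-p)*h^2
      + m*(t^(2*p)*h^(2*(1-p))) := by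
  have hp : 0 < p := lt_of_lt_of_le hm hmp
  have hp1 : p < 1 := by linarith
  have ha : 0 ≤ 1 - m - p := by linarith
  rcases eq_or_lt_of_le ht with ht0 | ht0
  · -- t = 0
    have : (0:ℝ) ^ (2*p) = 0 := Real.zero_rpow (by positivity)
    rw [← ht0, this]
    have h1 : 0 ≤ (p-m)*(1-p) := mul_nonneg (by linarith) (by linarith)
    nlinarith [mul_nonneg h1 (sq_nonneg h)]
  rcases eq_or_lt_of_le hh with hh0 | hh0
  · -- h = 0
    have : (0:ℝ) ^ (2*(1-p)) = 0 := Real.zero_rpow (ne_of_gt (by linarith))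
    rw [← hh0, this]
    have h1 : 0 ≤ p*(1-m-p) := mul_nonneg hp.le ha
    nlinarith [mul_nonneg h1 (sq_nonneg t)]
  -- main case t, h > 0
  have hW : (0:ℝ) < 2*p*(1-p) := by nlinarith
  set W := 2*p*(1-p) with hWdef
  have key := Real.geom_mean_le_arith_mean3_weighted
    (w₁ := p*(1-m-p)/W) (w₂ := (p-m)*(1-p)/W) (w₃ := m/W)
    (p₁ := t^2) (p₂ := h^2) (p₃ := t^(2*p)*h^(2*(1-p)))
    (div_nonneg (mul_nonneg hp.le ha) hW.le)
    (div_nonneg (mul_nonneg (by linarith) (by linarith)) hW.le)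
    (div_nonneg hm.le hW.le)
    (sq_nonneg t) (sq_nonneg h)
    (mul_nonneg (Real.rpow_nonneg ht _) (Real.rpow_nonneg hh _))
    (by field_simp; ring)
  have hgm : (t^2) ^ (p*(1-m-p)/W) * (h^2) ^ ((p-m)*(1-p)/W)
      * (t^(2*p)*h^(2*(1-p))) ^ (m/W) = t * h := by
    rw [Real.mul_rpow (Real.rpow_nonneg ht _) (Real.rpow_nonneg hh _),
      ← Real.rpow_natCast t 2, ← Real.rpow_natCast h 2,
      ← Real.rpow_mul ht, ← Real.rpow_mul hh,
      ← Real.rpow_mul ht, ← Real.rpow_mul hh]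
    rw [show (t ^ ((2:ℕ) * (p*(1-m-p)/W)) * h ^ ((2:ℕ) * ((p-m)*(1-p)/W)) *
        (t ^ (2*p*(m/W)) * h ^ (2*(1-p)*(m/W)))) =
        (t ^ ((2:ℕ) * (p*(1-m-p)/W)) * t ^ (2*p*(m/W))) *
        (h ^ ((2:ℕ) * ((p-m)*(1-p)/W)) * h ^ (2*(1-p)*(m/W))) by ring]
    rw [← Real.rpow_add ht0, ← Real.rpow_add hh0]
    have e1 : (2:ℕ) * (p*(1-m-p)/W) + 2*p*(m/W) = 1 := by
      push_cast; field_simp; ring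
    have e2 : (2:ℕ) * ((p-m)*(1-p)/W) + 2*(1-p)*(m/W) = 1 := by
      push_cast; field_simp; ring
    rw [e1, e2, Real.rpow_one, Real.rpow_one]
  rw [hgm] at key
  have := mul_le_mul_of_nonneg_left key hW.le
  calc 2*p*(1-p)*(t*h) = W * (t*h) := by rw [hWdef]
    _ ≤ W * (p*(1-m-p)/W * t^2 + (p-m)*(1-p)/W * h^2 + m/W * (t^(2*p)*h^(2*(1-p)))) := this
    _ = p*(1-m-p)*t^2 + (p-m)*(1-p)*h^2 + m*(t^(2*p)*h^(2*(1-p))) := by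
        field_simp

private lemma factII {m p t h : ℝ} (hm : 0 < m) (hmp : m ≤ p) (hpm : p + m ≤ 1)
    (hh : 0 ≤ h) (ht : 0 ≤ t) (hB : (1-p)*h ≤ (1-p-m)*t) :
    (1-p)*(1-m)*h^2 ≤ (1-p-m) * (t^(2*p) * h^(2*(1-p))) := by
  have hp : 0 < p := lt_of_lt_of_le hm hmp
  have hp1 : p < 1 := by linarith
  have ha0 : 0 ≤ 1 - p - m := by linarith
  rcases eq_or_lt_of_le hh with hh0 | hh0
  · rw [← hh0]
    have : (0:ℝ) ^ (2*(1-p)) = 0 := Real.zero_rpow (ne_of_gt (by linarith))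
    rw [this]
    nlinarith
  -- h > 0; then a > 0
  have ha : 0 < 1 - p - m := by
    rcases eq_or_lt_of_le ha0 with h0 | h0
    · exfalso; rw [← h0] at hB; nlinarith
    · exact h0
  set a := 1 - p - m with hadef
  have ht0 : 0 < t := by nlinarith
  set r := t / h with hrdef
  have hr0 : 0 < r := div_pos ht0 hh0
  have htrh : t = r * h := by rw [hrdef, div_mul_cancel₀ _ (ne_of_gt hh0)]
  have har : 1 - p ≤ a * r := by
    rw [hrdef, ← mul_div_assoc, le_div_iff₀ hh0]
    linarith
  have hr1 : 1 ≤ r := by nlinarith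
  -- rewrite the rpow product
  have hK : t^(2*p) * h^(2*(1-p)) = r^(2*p) * h^2 := by
    rw [htrh, Real.mul_rpow hr0.le hh0.le]
    rw [mul_assoc, ← Real.rpow_add hh0]
    rw [show 2*p + 2*(1-p) = ((2:ℕ):ℝ) by push_cast; ring, Real.rpow_natCast]
  rw [hK]
  have main : (1-p)*(1-m) ≤ a * r^(2*p) := by
    rcases le_or_gt 1 (2*p) with hp2 | hp2
    · -- p ≥ 1/2 : r^(2p) ≥ r
      have : r ^ (1:ℝ) ≤ r ^ (2*p) := Real.rpow_le_rpow_of_exponent_le hr1 hp2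
      rw [Real.rpow_one] at this
      nlinarith
    · -- p < 1/2
      have hB1 : r^(1-2*p) * 1^(2*p) ≤ (1-2*p)*r + (2*p)*1 :=
        Real.geom_mean_le_arith_mean2_weighted (by linarith) (by linarith)
          hr0.le zero_le_one (by ring)
      rw [Real.one_rpow, mul_one, mul_one] at hB1
      have hB2 : r^(2*p) * r^(1-2*p) = r := by
        rw [← Real.rpow_add hr0]; norm_num
      have hpos1 : 0 < r^(1-2*p) := Real.rpow_pos_of_pos hr0 _
      have hpos2 : 0 < r^(2*p) := Real.rpow_pos_of_pos hr0 _
      -- r^(2p) ≥ r / ((1-2p) r + 2p)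
      have hden : 0 < (1-2*p)*r + 2*p := by nlinarith
      have hlow : r / ((1-2*p)*r + 2*p) ≤ r^(2*p) := by
        rw [div_le_iff₀ hden]
        calc r = r^(2*p) * r^(1-2*p) := hB2.symm
          _ ≤ r^(2*p) * ((1-2*p)*r + 2*p) := by
              exact mul_le_mul_of_nonneg_left hB1 hpos2.le
      -- linear inequality : (1-p)(1-m)((1-2p)r+2p) ≤ a r
      have hlin : (1-p)*(1-m)*((1-2*p)*r + 2*p) ≤ a * r := by
        have hm2 : 0 ≤ 1 - 2*m := by linarith
        have e1 : 0 ≤ 2-2*p-3*m+2*m*p := by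
          nlinarith [mul_nonneg (by linarith : (0:ℝ) ≤ 1-m) hm2,
            mul_nonneg hm.le (sub_nonneg.mpr hmp)]
        have hc : 0 ≤ p*(2-2*p-3*m+2*m*p) := mul_nonneg hp.le e1
        have h1 : 0 ≤ a*r - (1-p) := by linarith
        have h2 : 0 ≤ m*p*(1-2*m)*(1-p) :=
          mul_nonneg (mul_nonneg (mul_nonneg hm.le hp.le) hm2) (by linarith)
        have key : a*((a*r) - ((1-p)*(1-m)*((1-2*p)*r + 2*p)))
            = (p*(2-2*p-3*m+2*m*p)) * (a*r - (1-p)) + m*p*(1-2*m)*(1-p) := by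
          rw [hadef]; ring
        have h3 : 0 ≤ a*((a*r) - ((1-p)*(1-m)*((1-2*p)*r + 2*p))) := by
          rw [key]; nlinarith [mul_nonneg hc h1]
        have h4 := (mul_nonneg_iff_of_pos_left ha).mp h3
        linarith
      calc (1-p)*(1-m) ≤ a * (r / ((1-2*p)*r + 2*p)) := by
            rw [← mul_div_assoc, le_div_iff₀ hden]
            linarith [hlin]
        _ ≤ a * r^(2*p) := mul_le_mul_of_nonneg_left hlow ha.le
  nlinarith [mul_le_mul_of_nonneg_right main (sq_nonneg h)]

set_option maxHeartbeats 1000000 in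
private lemma onestep_core {m p t ν S h K : ℝ} (hm : 0 < m) (hmp : m ≤ p)
    (hpm : p + m ≤ 1) (ht : 0 ≤ t) (hh : 0 ≤ h) (hK0 : 0 ≤ K)
    (hGS : h^2 ≤ S) (hν : 0 ≤ ν)
    (hIH : (1-p) * ν^2 ≤ (1-p-m) * S + m * h^2)
    (hF1 : 2*p*(1-p)*(t*h) ≤ p*(1-m-p)*t^2 + (p-m)*(1-p)*h^2 + m*K)
    (hFII : (1-p)*h ≤ (1-p-m)*t → (1-p)*(1-m)*h^2 ≤ (1-p-m) * K) :
    (p*t + (1-p)*ν)^2 ≤ (1-m) * (p*t^2 + (1-p)*S) + m * K := by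
  have hp : 0 < p := lt_of_lt_of_le hm hmp
  have hp1 : p < 1 := by linarith
  have h1p : 0 < 1 - p := by linarith
  have ha0 : 0 ≤ 1 - p - m := by linarith
  have hS : 0 ≤ S := le_trans (sq_nonneg h) hGS
  rcases le_or_gt ((1-p-m)*t) ((1-p)*h) with hA | hB
  · -- Case A
    have hii : 2*t*(ν - h) ≤ S - h^2 := by
      rcases le_or_gt ν h with hνh | hνh
      · have l1 : 2*t*(ν - h) ≤ 0 := by nlinarith [mul_nonneg ht (sub_nonneg.mpr hνh)]
        nlinarith
      · have hi : (1-p)*(ν^2 - h^2) ≤ (1-p-m)*(S - h^2) := by nlinarith [hIH]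
        have ha : 0 < 1 - p - m := by
          rcases eq_or_lt_of_le ha0 with h0 | h0
          · exfalso; rw [← h0] at hi
            nlinarith [mul_pos (sub_pos.mpr hνh) (by linarith : (0:ℝ) < ν + h)]
          · exact h0
        have c1 : (1-p-m)*(2*t*(ν-h)) ≤ (1-p)*h*(2*(ν-h)) := by
          nlinarith [mul_le_mul_of_nonneg_right hA (by linarith : (0:ℝ) ≤ 2*(ν-h))]
        have c2 : (1-p)*h*(2*(ν-h)) ≤ (1-p)*(ν+h)*(ν-h) := by
          nlinarith [mul_nonneg h1p.le (mul_nonneg (sub_nonneg.mpr hνh.le) (sub_nonneg.mpr hνh.le))]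
        have c3 : (1-p-m)*(2*t*(ν-h)) ≤ (1-p-m)*(S - h^2) := by nlinarith [hi]
        exact le_of_mul_le_mul_left (by linarith) ha
    nlinarith [hF1, mul_le_mul_of_nonneg_left hii (mul_nonneg hp.le h1p.le),
      mul_le_mul_of_nonneg_left hIH h1p.le]
  · -- Case B
    have II := hFII hB.le
    rcases eq_or_lt_of_le ha0 with ha | ha
    · -- a = 0 : h = 0, ν = 0
      have hhz : h = 0 := by nlinarith
      have hνz : ν = 0 := by nlinarith [hIH, sq_nonneg ν]
      rw [hνz]
      nlinarith [hK0, mul_nonneg h1p.le hS, sq_nonneg t]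
    · have hq : 0 ≤ ((1-p-m)*t - (1-p)*ν)^2 := sq_nonneg _
      nlinarith [mul_nonneg hp.le hq,
        mul_le_mul_of_nonneg_left hIH (mul_nonneg (by linarith : (0:ℝ) ≤ 1-m) h1p.le),
        mul_le_mul_of_nonneg_left II hm.le]

private lemma onestep {m p t ν S G : ℝ} (hm : 0 < m) (hmp : m ≤ p) (hpm : p + m ≤ 1)
    (ht : 0 ≤ t) (hG : 0 ≤ G) (hGS : G ≤ S) (hν : 0 ≤ ν)
    (hIH : (1-p) * ν^2 ≤ (1-p-m) * S + m * G) :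
    (p*t + (1-p)*ν)^2 ≤ (1-m) * (p*t^2 + (1-p)*S) + m * (t^(2*p) * G^(1-p)) := by
  have hp : 0 < p := lt_of_lt_of_le hm hmp
  obtain ⟨h, hh, hh2⟩ : ∃ h : ℝ, 0 ≤ h ∧ h^2 = G :=
    ⟨Real.sqrt G, Real.sqrt_nonneg G, Real.sq_sqrt hG⟩
  have hKh : G^(1-p) = h^(2*(1-p)) := by
    rw [← hh2, ← Real.rpow_natCast h 2, ← Real.rpow_mul hh]
    norm_num
  rw [hKh]
  exact onestep_core hm hmp hpm ht hh
    (mul_nonneg (Real.rpow_nonneg ht _) (Real.rpow_nonneg hh _))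
    (by rw [hh2]; exact hGS) hν (by rw [hh2]; exact hIH)
    (gm3 hm hmp hpm ht hh) (fun hB => factII hm hmp hpm hh ht hB)

private lemma key_ind {ι : Type*} (s : Finset ι) :
    ∀ (w y : ι → ℝ) (m : ℝ), 0 < m → (∀ i ∈ s, m ≤ w i) → (∀ i ∈ s, 0 ≤ y i) →
    (∑ i ∈ s, w i) = 1 →
    (∑ i ∈ s, w i * y i)^2 ≤
      (1-m) * (∑ i ∈ s, w i * y i^2) + m * ∏ i ∈ s, (y i) ^ (2 * w i) := by
  induction s using Finset.cons_induction with
  | empty => intro w y m _ _ _ hsum; simp at hsum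
  | cons j s' hj ih =>
    intro w y m hm hw hy hsum
    rcases Finset.eq_empty_or_nonempty s' with hs' | ⟨i0, hi0⟩
    · subst hs'
      simp only [Finset.sum_cons, Finset.sum_empty, Finset.prod_cons,
        Finset.prod_empty, add_zero, mul_one] at *
      have hyj : 0 ≤ y j := hy j (Finset.mem_cons_self j ∅)
      have hmw : m ≤ w j := hw j (Finset.mem_cons_self j ∅)
      rw [hsum]
      rw [show (2:ℝ) * 1 = ((2:ℕ):ℝ) by norm_num, Real.rpow_natCast]
      nlinarith [sq_nonneg (y j)]
    · -- s' nonempty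
      have hmemj : j ∈ Finset.cons j s' hj := Finset.mem_cons_self j s'
      have hmem : ∀ i ∈ s', i ∈ Finset.cons j s' hj :=
        fun i hi => Finset.mem_cons_of_mem hi
      set p := w j with hpdef
      have hmp : m ≤ p := hw j hmemj
      have hp : 0 < p := lt_of_lt_of_le hm hmp
      have hsum' : ∑ i ∈ s', w i = 1 - p := by
        rw [Finset.sum_cons] at hsum; linarith
      have hc : m ≤ 1 - p := by
        rw [← hsum']
        calc m ≤ w i0 := hw i0 (hmem i0 hi0)
          _ ≤ ∑ i ∈ s', w i := Finset.single_le_sum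
              (fun i hi => le_trans hm.le (hw i (hmem i hi))) hi0
      have h1p : 0 < 1 - p := lt_of_lt_of_le hm hc
      -- apply ih with normalized weights
      have ihc := ih (fun i => w i / (1-p)) y (m / (1-p))
        (div_pos hm h1p)
        (fun i hi => (div_le_div_iff_of_pos_right h1p).mpr (hw i (hmem i hi)))
        (fun i hi => hy i (hmem i hi))
        (by rw [← Finset.sum_div, hsum', div_self (ne_of_gt h1p)])
      set ν := ∑ i ∈ s', (w i / (1-p)) * y i with hνdef
      set S := ∑ i ∈ s', (w i / (1-p)) * y i^2 with hSdef
      set G := ∏ i ∈ s', y i ^ (2 * (w i / (1-p))) with hGdef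
      have hyj : 0 ≤ y j := hy j hmemj
      have hν0 : 0 ≤ ν := Finset.sum_nonneg fun i hi =>
        mul_nonneg (div_nonneg (le_trans hm.le (hw i (hmem i hi))) h1p.le)
          (hy i (hmem i hi))
      have hG0 : 0 ≤ G := Finset.prod_nonneg fun i hi =>
        Real.rpow_nonneg (hy i (hmem i hi)) _
      have hGS : G ≤ S := by
        have hfac : ∀ i ∈ s', y i ^ (2*(w i/(1-p))) = (y i^2) ^ (w i/(1-p)) := by
          intro i hi
          rw [Real.rpow_mul (hy i (hmem i hi)) 2, Real.rpow_two]
        calc G = ∏ i ∈ s', (y i^2) ^ (w i/(1-p)) := Finset.prod_congr rfl hfac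
          _ ≤ ∑ i ∈ s', (w i/(1-p)) * y i^2 :=
            Real.geom_mean_le_arith_mean_weighted s' _ _
              (fun i hi => div_nonneg (le_trans hm.le (hw i (hmem i hi))) h1p.le)
              (by rw [← Finset.sum_div, hsum', div_self (ne_of_gt h1p)])
              (fun i hi => sq_nonneg _)
      have e : (1-p) * ((1 - m/(1-p))*S + (m/(1-p))*G) = (1-p-m)*S + m*G := by
        field_simp
      have hIH' : (1-p)*ν^2 ≤ (1-p-m)*S + m*G := by
        rw [← e]
        exact mul_le_mul_of_nonneg_left ihc h1p.le
      have main := onestep hm hmp (by linarith : p + m ≤ 1) hyj hG0 hGS hν0 hIH'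
      -- convert to the goal
      have eν : (∑ i ∈ Finset.cons j s' hj, w i * y i) = p * y j + (1-p)*ν := by
        rw [Finset.sum_cons, hνdef, Finset.mul_sum]
        congr 1
        refine Finset.sum_congr rfl fun i hi => ?_
        field_simp
      have eS : (∑ i ∈ Finset.cons j s' hj, w i * y i^2) = p * y j^2 + (1-p)*S := by
        rw [Finset.sum_cons, hSdef, Finset.mul_sum]
        congr 1
        refine Finset.sum_congr rfl fun i hi => ?_
        field_simp
      have eG : (∏ i ∈ Finset.cons j s' hj, (y i) ^ (2 * w i))
          = (y j)^(2*p) * G^(1-p) := by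
        rw [Finset.prod_cons, hGdef]
        congr 1
        rw [← Real.finset_prod_rpow s' _
          (fun i hi => Real.rpow_nonneg (hy i (hmem i hi)) _) (1-p)]
        refine Finset.prod_congr rfl fun i hi => ?_
        rw [← Real.rpow_mul (hy i (hmem i hi))]
        congr 1
        field_simp
      rw [eν, eS, eG]
      exact main

private lemma claim_comp {ι : Type*} [Fintype ι] [Nonempty ι] (x α β : ι → ℝ) (c : ℝ)
    (hx : ∀ i, 0 ≤ x i) (hα : ∀ i, 0 < α i) (hβ : ∀ i, 0 < β i)
    (hαs : ∑ i, α i = 1) (hβs : ∑ i, β i = 1) (hc : ∀ i, α i ≤ c * β i) :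
    ∑ i, α i * x i - ∏ i, x i ^ α i ≤ c * (∑ i, β i * x i - ∏ i, x i ^ β i) := by
  have hc1 : 1 ≤ c := by
    have hlt2 : ∑ i, α i ≤ c * ∑ i, β i := by
      rw [Finset.mul_sum]; exact Finset.sum_le_sum (fun i _ => hc i)
    rw [hαs, hβs, mul_one] at hlt2; exact hlt2
  rcases eq_or_lt_of_le hc1 with hc1' | hc1'
  · -- c = 1 : α = β
    have hab : ∀ i, α i = β i := by
      intro i
      have hsum0 : ∑ j, (β j - α j) = 0 := by
        rw [Finset.sum_sub_distrib, hαs, hβs]; ring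
      have hnn : ∀ j ∈ Finset.univ, 0 ≤ β j - α j := fun j _ => by
        have := hc j; rw [← hc1', one_mul] at this; linarith
      have := (Finset.sum_eq_zero_iff_of_nonneg hnn).mp hsum0 i (Finset.mem_univ i)
      linarith
    have e1 : ∑ i, α i * x i = ∑ i, β i * x i :=
      Finset.sum_congr rfl fun i _ => by rw [hab i]
    have e2 : ∏ i, x i ^ α i = ∏ i, x i ^ β i :=
      Finset.prod_congr rfl fun i _ => by rw [hab i]
    rw [← hc1', one_mul, e1, e2]
  · have hc0 : 0 < c := by linarith
    have hcm1 : 0 < c - 1 := by linarith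
    by_cases hx0 : ∃ i, x i = 0
    · obtain ⟨i0, hxi0⟩ := hx0
      have hpA : ∏ i, x i ^ α i = 0 := Finset.prod_eq_zero (Finset.mem_univ i0)
        (by rw [hxi0]; exact Real.zero_rpow (ne_of_gt (hα i0)))
      have hpB : ∏ i, x i ^ β i = 0 := Finset.prod_eq_zero (Finset.mem_univ i0)
        (by rw [hxi0]; exact Real.zero_rpow (ne_of_gt (hβ i0)))
      rw [hpA, hpB, sub_zero, sub_zero, Finset.mul_sum]
      exact Finset.sum_le_sum fun i _ => by
        rw [← mul_assoc]; exact mul_le_mul_of_nonneg_right (hc i) (hx i)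
    · push_neg at hx0
      have hxp : ∀ i, 0 < x i := fun i => lt_of_le_of_ne (hx i) (Ne.symm (hx0 i))
      set γ : ι → ℝ := fun i => (c * β i - α i)/(c-1) with hγdef
      have hγ0 : ∀ i, 0 ≤ γ i := fun i => div_nonneg (by linarith [hc i]) hcm1.le
      have hγs : ∑ i, γ i = 1 := by
        rw [hγdef, ← Finset.sum_div, Finset.sum_sub_distrib, ← Finset.mul_sum,
          hαs, hβs, mul_one, div_self (ne_of_gt hcm1)]
      have hA1 : ∏ i, x i ^ γ i ≤ ∑ i, γ i * x i :=
        Real.geom_mean_le_arith_mean_weighted Finset.univ _ _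
          (fun i _ => hγ0 i) hγs (fun i _ => hx i)
      have hApos : 0 ≤ ∏ i, x i ^ γ i :=
        Finset.prod_nonneg fun i _ => Real.rpow_nonneg (hx i) _
      have hvpos : 0 ≤ ∏ i, x i ^ α i :=
        Finset.prod_nonneg fun i _ => Real.rpow_nonneg (hx i) _
      have hgm2 := Real.geom_mean_le_arith_mean2_weighted
        (div_nonneg hcm1.le hc0.le) (by positivity : (0:ℝ) ≤ 1/c)
        hApos hvpos (by field_simp; ring)
      have hid : (∏ i, x i ^ γ i) ^ ((c-1)/c) * (∏ i, x i ^ α i) ^ (1/c)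
          = ∏ i, x i ^ β i := by
        rw [← Real.finset_prod_rpow _ _ (fun i _ => Real.rpow_nonneg (hx i) _) _,
          ← Real.finset_prod_rpow _ _ (fun i _ => Real.rpow_nonneg (hx i) _) _,
          ← Finset.prod_mul_distrib]
        refine Finset.prod_congr rfl fun i _ => ?_
        rw [← Real.rpow_mul (hx i), ← Real.rpow_mul (hx i), ← Real.rpow_add (hxp i)]
        congr 1
        rw [hγdef]
        field_simp
        ring
      rw [hid] at hgm2
      have hsumγ : (c-1) * (∑ i, γ i * x i) = c * (∑ i, β i * x i) - ∑ i, α i * x i := by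
        rw [Finset.mul_sum, Finset.mul_sum, ← Finset.sum_sub_distrib]
        refine Finset.sum_congr rfl fun i _ => ?_
        rw [hγdef]
        field_simp
      -- multiply hgm2 by c and combine
      have h6 := mul_le_mul_of_nonneg_left hgm2 hc0.le
      have e7 : c * ((c-1)/c * (∏ i, x i ^ γ i) + 1/c * (∏ i, x i ^ α i))
          = (c-1) * (∏ i, x i ^ γ i) + (∏ i, x i ^ α i) := by
        field_simp
      rw [e7] at h6
      have h8 := mul_le_mul_of_nonneg_left hA1 hcm1.le
      linarith

private lemma keyF {ι : Type*} [Fintype ι] [Nonempty ι] (w x : ι → ℝ) (m : ℝ)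
    (hm : 0 < m) (hw : ∀ i, m ≤ w i) (hx : ∀ i, 0 ≤ x i) (hws : ∑ i, w i = 1) :
    ∑ i, w i * x i - ∏ i, x i ^ w i ≤
      (1/m) * (∑ i, w i * x i - (∑ i, w i * Real.sqrt (x i))^2) := by
  have hkey := key_ind Finset.univ w (fun i => Real.sqrt (x i)) m hm
    (fun i _ => hw i) (fun i _ => Real.sqrt_nonneg _) hws
  have e1 : ∀ i, Real.sqrt (x i) ^ 2 = x i := fun i => Real.sq_sqrt (hx i)
  have e2 : ∀ i ∈ Finset.univ, (Real.sqrt (x i)) ^ (2 * w i) = x i ^ w i := fun i _ => by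
    rw [Real.rpow_mul (Real.sqrt_nonneg _) 2, Real.rpow_two, e1]
  rw [Finset.prod_congr rfl e2] at hkey
  have e3 : ∑ i, w i * Real.sqrt (x i)^2 = ∑ i, w i * x i :=
    Finset.sum_congr rfl fun i _ => by rw [e1]
  rw [e3] at hkey
  rw [one_div, inv_mul_eq_div, le_div_iff₀ hm]
  nlinarith [hkey]

theorem amgm_gap_mixed_upper_bound (n : ℕ) (hn : 2 ≤ n)
    (x α β : Fin n → ℝ) (hx : ∀ i, 0 ≤ x i)
    (hα : ∀ i, 0 < α i) (hαs : ∑ i, α i = 1)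
    (hβ : ∀ i, 0 < β i) (hβs : ∑ i, β i = 1) :
    ∑ i, α i * x i - ∏ i, x i ^ α i ≤
      (⨆ k, α k / β k) * min (1 / ⨅ i, α i) (1 / ⨅ i, β i) *
        (∑ i, β i * x i - (∑ i, β i * Real.sqrt (x i)) ^ 2) := by
  have hn0 : 0 < n := by omega
  haveI : Nonempty (Fin n) := ⟨⟨0, hn0⟩⟩
  set A := ⨅ i, α i with hAdef
  set B := ⨅ i, β i with hBdef
  set c := ⨆ k, α k / β k with hcdef
  obtain ⟨ka, hka⟩ := exists_eq_ciInf_of_finite (f := α)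
  obtain ⟨kb, hkb⟩ := exists_eq_ciInf_of_finite (f := β)
  have hA0 : 0 < A := by rw [hAdef, ← hka]; exact hα ka
  have hB0 : 0 < B := by rw [hBdef, ← hkb]; exact hβ kb
  have hAle : ∀ i, A ≤ α i := fun i => ciInf_le (Finite.bddBelow_range α) i
  have hBle : ∀ i, B ≤ β i := fun i => ciInf_le (Finite.bddBelow_range β) i
  have hcge : ∀ i, α i ≤ c * β i := fun i => by
    have h1 : α i / β i ≤ c := by
      rw [hcdef]
      exact le_ciSup (f := fun k => α k / β k) (Finite.bddAbove_range _) i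
    exact (div_le_iff₀ (hβ i)).mp h1
  have hc0 : 0 < c := by
    obtain ⟨i0⟩ := ‹Nonempty (Fin n)›
    refine lt_of_lt_of_le (div_pos (hα i0) (hβ i0)) ?_
    rw [hcdef]
    exact le_ciSup (f := fun k => α k / β k) (Finite.bddAbove_range _) i0
  set y := fun i => Real.sqrt (x i) with hydef
  set nua := ∑ i, α i * y i with hnuadef
  set νβ := ∑ i, β i * y i with hνbdef
  set V := (∑ i, β i * x i) - νβ^2 with hVdef
  have hy2 : ∀ i, y i ^ 2 = x i := fun i => Real.sq_sqrt (hx i)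
  -- variance transfer
  have trans : (∑ i, α i * x i) - nua^2 ≤ c * V := by
    have id1 : ∀ i ∈ Finset.univ, α i * (y i - νβ)^2
        = α i * x i - 2*νβ*(α i * y i) + νβ^2 * α i := fun i _ => by
      linear_combination α i * (hy2 i)
    have id2 : ∀ i ∈ Finset.univ, β i * (y i - νβ)^2
        = β i * x i - 2*νβ*(β i * y i) + νβ^2 * β i := fun i _ => by
      linear_combination β i * (hy2 i)
    have l1 : ∑ i, α i * (y i - νβ)^2 = (∑ i, α i * x i) - 2*νβ*nua + νβ^2 := by
      rw [Finset.sum_congr rfl id1, Finset.sum_add_distrib, Finset.sum_sub_distrib,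
        ← Finset.mul_sum, ← Finset.mul_sum, hαs, mul_one, hnuadef]
    have l2 : ∑ i, β i * (y i - νβ)^2 = (∑ i, β i * x i) - νβ^2 := by
      rw [Finset.sum_congr rfl id2, Finset.sum_add_distrib, Finset.sum_sub_distrib,
        ← Finset.mul_sum, ← Finset.mul_sum, hβs, mul_one, ← hνbdef]
      ring
    have l3 : ∑ i, α i * (y i - νβ)^2 ≤ c * ∑ i, β i * (y i - νβ)^2 := by
      rw [Finset.mul_sum]
      refine Finset.sum_le_sum fun i _ => ?_
      nlinarith [mul_le_mul_of_nonneg_right (hcge i) (sq_nonneg (y i - νβ))]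
    nlinarith [sq_nonneg (nua - νβ), l1, l2, l3, hVdef]
  -- chain 1
  have ch1 : ∑ i, α i * x i - ∏ i, x i ^ α i ≤ (1/A) * (c * V) := by
    refine le_trans (keyF α x A hA0 hAle hx hαs) ?_
    exact mul_le_mul_of_nonneg_left trans (by positivity)
  -- chain 2
  have ch2 : ∑ i, α i * x i - ∏ i, x i ^ α i ≤ c * ((1/B) * V) := by
    refine le_trans (claim_comp x α β c hx hα hβ hαs hβs hcge) ?_
    exact mul_le_mul_of_nonneg_left (keyF β x B hB0 hBle hx hβs) hc0.le
  rcases le_total (1/A) (1/B) with hmin | hmin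
  · rw [min_eq_left hmin]
    calc ∑ i, α i * x i - ∏ i, x i ^ α i ≤ (1/A) * (c * V) := ch1
      _ = c * (1/A) * V := by ring
  · rw [min_eq_right hmin]
    calc ∑ i, α i * x i - ∏ i, x i ^ α i ≤ c * ((1/B) * V) := ch2
      _ = c * (1/B) * V := by ring
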